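/- For every simple graph G, there exists a double Roman dominating function of G of minimum weight γ_dR(G) that assigns the value 1 to no vertex. -/
import Mathlib


/-- A double Roman dominating function on a simple graph `G`:
values in `{0,1,2,3}`, every vertex with value `0` has two neighbors with value `2`
or one neighbor with value `3`, and every vertex with value `1` has a neighbor with
value at least `2`. -/
def IsDRDF {V : Type*} (G : SimpleGraph V) (f : V → ℕ) : Prop :=
  (∀ v, f v ≤ 3) ∧
  (∀ v, f v = 0 →
    (∃ u w, u ≠ w ∧ G.Adj v u ∧ G.Adj v w ∧ f u = 2 ∧ f w = 2) ∨ ∃ u, G.Adj v u ∧ f u = 3) ∧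
  (∀ v, f v = 1 → ∃ u, G.Adj v u ∧ 2 ≤ f u)

/-- The double Roman domination number: the minimum weight of a DRDF. -/
noncomputable def gammaDR {V : Type*} [Fintype V] (G : SimpleGraph V) : ℕ :=
  sInf {w | ∃ f, IsDRDF G f ∧ ∑ v, f v = w}

lemma drdf_const3 {V : Type*} (G : SimpleGraph V) : IsDRDF G (fun _ => 3) :=
  ⟨fun _ => le_refl 3, fun _ h => by simp at h, fun _ h => by simp at h⟩

lemma gammaDR_key {V : Type*} [Fintype V] (G : SimpleGraph V) :
    ∀ (n : ℕ) (f : V → ℕ), IsDRDF G f → ∑ v, f v = gammaDR G →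
      (Finset.univ.filter (fun v => f v = 1)).card ≤ n →
      ∃ g, IsDRDF G g ∧ ∑ v, g v = gammaDR G ∧ ∀ v, g v ≠ 1 := by
  intro n
  induction n with
  | zero =>
    intro f hf hsum hcard
    refine ⟨f, hf, hsum, fun v hv => ?_⟩
    have hmem : v ∈ Finset.univ.filter (fun v => f v = 1) := by simp [hv]
    have := Finset.card_pos.mpr ⟨v, hmem⟩
    omega
  | succ n ih =>
    classical
    intro f hf hsum hcard
    by_cases hempty : (Finset.univ.filter (fun v => f v = 1)).card = 0
    · refine ⟨f, hf, hsum, fun v hv => ?_⟩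
      have hmem : v ∈ Finset.univ.filter (fun v => f v = 1) := by simp [hv]
      have := Finset.card_pos.mpr ⟨v, hmem⟩
      omega
    · obtain ⟨v, hvmem⟩ := Finset.card_pos.mp (Nat.pos_of_ne_zero hempty)
      have hv : f v = 1 := (Finset.mem_filter.mp hvmem).2
      obtain ⟨hle, hzero, hone⟩ := hf
      obtain ⟨u, hadj, hu2⟩ := hone v hv
      have hvu : v ≠ u := G.ne_of_adj hadj
      have huv : u ≠ v := hvu.symm
      have hu3 := hle u
      rcases (by omega : f u = 2 ∨ f u = 3) with hfu | hfu
      · -- replace value 1 at v by 0, value 2 at u by 3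
        set g : V → ℕ := fun w => if w = v then 0 else if w = u then 3 else f w with hg
        have hgv : g v = 0 := by simp [hg]
        have hgu : g u = 3 := by simp [hg, huv]
        have hgo : ∀ w, w ≠ v → w ≠ u → g w = f w := by
          intro w h1 h2; simp [hg, h1, h2]
        have hdrdf : IsDRDF G g := by
          refine ⟨?_, ?_, ?_⟩
          · intro w
            by_cases h1 : w = v
            · simp [h1, hgv]
            · by_cases h2 : w = u
              · simp [h2, hgu]
              · rw [hgo w h1 h2]; exact hle w
          · intro w hw
            by_cases h1 : w = v
            · subst h1
              exact Or.inr ⟨u, hadj, hgu⟩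
            · by_cases h2 : w = u
              · rw [h2, hgu] at hw; omega
              · rw [hgo w h1 h2] at hw
                rcases hzero w hw with ⟨a, b, hab, ha, hb, ha2, hb2⟩ | ⟨c, hc, hc3⟩
                · have hav : a ≠ v := by intro h; rw [h, hv] at ha2; omega
                  have hbv : b ≠ v := by intro h; rw [h, hv] at hb2; omega
                  by_cases hau : a = u
                  · exact Or.inr ⟨a, ha, by rw [hau, hgu]⟩
                  · by_cases hbu : b = u
                    · exact Or.inr ⟨b, hb, by rw [hbu, hgu]⟩
                    · exact Or.inl ⟨a, b, hab, ha, hb, by rw [hgo a hav hau]; exact ha2,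
                        by rw [hgo b hbv hbu]; exact hb2⟩
                · have hcv : c ≠ v := by intro h; rw [h, hv] at hc3; omega
                  by_cases hcu : c = u
                  · exact Or.inr ⟨c, hc, by rw [hcu, hgu]⟩
                  · exact Or.inr ⟨c, hc, by rw [hgo c hcv hcu]; exact hc3⟩
          · intro w hw
            have h1 : w ≠ v := by intro h; rw [h, hgv] at hw; omega
            have h2 : w ≠ u := by intro h; rw [h, hgu] at hw; omega
            rw [hgo w h1 h2] at hw
            obtain ⟨x, hx, hx2⟩ := hone w hw
            have hxv : x ≠ v := by intro h; rw [h, hv] at hx2; omega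
            by_cases hxu : x = u
            · exact ⟨x, hx, by rw [hxu, hgu]; omega⟩
            · exact ⟨x, hx, by rw [hgo x hxv hxu]; exact hx2⟩
        have hsum' : ∑ w, g w = ∑ w, f w := by
          rw [← Finset.add_sum_erase _ g (Finset.mem_univ v),
            ← Finset.add_sum_erase _ f (Finset.mem_univ v)]
          have hu : u ∈ Finset.univ.erase v := Finset.mem_erase.mpr ⟨huv, Finset.mem_univ u⟩
          rw [← Finset.add_sum_erase _ g hu, ← Finset.add_sum_erase _ f hu]
          have heq : ∀ w ∈ (Finset.univ.erase v).erase u, g w = f w := by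
            intro w hw
            rw [Finset.mem_erase, Finset.mem_erase] at hw
            exact hgo w hw.2.1 hw.1
          rw [Finset.sum_congr rfl heq, hgv, hgu, hv, hfu,
            show ((Finset.univ.erase v).erase u).sum f
              = ∑ x ∈ (Finset.univ.erase v).erase u, f x from rfl]
          omega
        have hcard' : (Finset.univ.filter (fun w => g w = 1)).card ≤ n := by
          have hsub : Finset.univ.filter (fun w => g w = 1) ⊆
              (Finset.univ.filter (fun w => f w = 1)).erase v := by
            intro w hw
            have hgw : g w = 1 := (Finset.mem_filter.mp hw).2
            have h1 : w ≠ v := by intro h; rw [h, hgv] at hgw; omega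
            have h2 : w ≠ u := by intro h; rw [h, hgu] at hgw; omega
            rw [hgo w h1 h2] at hgw
            exact Finset.mem_erase.mpr ⟨h1, Finset.mem_filter.mpr ⟨Finset.mem_univ w, hgw⟩⟩
          have h1 := Finset.card_le_card hsub
          rw [Finset.card_erase_of_mem hvmem] at h1
          omega
        exact ih g hdrdf (by rw [hsum', hsum]) hcard'
      · -- f u = 3 : dropping v to 0 gives smaller weight, contradiction
        exfalso
        set g : V → ℕ := fun w => if w = v then 0 else f w with hg
        have hgv : g v = 0 := by simp [hg]
        have hgo : ∀ w, w ≠ v → g w = f w := by intro w h1; simp [hg, h1]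
        have hdrdf : IsDRDF G g := by
          refine ⟨?_, ?_, ?_⟩
          · intro w
            by_cases h1 : w = v
            · simp [h1, hgv]
            · rw [hgo w h1]; exact hle w
          · intro w hw
            by_cases h1 : w = v
            · subst h1
              exact Or.inr ⟨u, hadj, by rw [hgo u huv]; exact hfu⟩
            · rw [hgo w h1] at hw
              rcases hzero w hw with ⟨a, b, hab, ha, hb, ha2, hb2⟩ | ⟨c, hc, hc3⟩
              · have hav : a ≠ v := by intro h; rw [h, hv] at ha2; omega
                have hbv : b ≠ v := by intro h; rw [h, hv] at hb2; omega
                exact Or.inl ⟨a, b, hab, ha, hb, by rw [hgo a hav]; exact ha2,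
                  by rw [hgo b hbv]; exact hb2⟩
              · have hcv : c ≠ v := by intro h; rw [h, hv] at hc3; omega
                exact Or.inr ⟨c, hc, by rw [hgo c hcv]; exact hc3⟩
          · intro w hw
            have h1 : w ≠ v := by intro h; rw [h, hgv] at hw; omega
            rw [hgo w h1] at hw
            obtain ⟨x, hx, hx2⟩ := hone w hw
            have hxv : x ≠ v := by intro h; rw [h, hv] at hx2; omega
            exact ⟨x, hx, by rw [hgo x hxv]; exact hx2⟩
        have hsum' : ∑ w, g w + 1 = ∑ w, f w := by
          rw [← Finset.add_sum_erase _ g (Finset.mem_univ v),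
            ← Finset.add_sum_erase _ f (Finset.mem_univ v)]
          have heq : ∀ w ∈ Finset.univ.erase v, g w = f w := by
            intro w hw
            exact hgo w (Finset.mem_erase.mp hw).1
          rw [Finset.sum_congr rfl heq, hgv, hv,
            show (Finset.univ.erase v).sum f = ∑ x ∈ Finset.univ.erase v, f x from rfl]
          omega
        have hle' : gammaDR G ≤ ∑ w, g w := Nat.sInf_le ⟨g, hdrdf, rfl⟩
        omega

/-- For every graph `G` there is a DRDF of minimum weight `γ_dR(G)` that assigns the
value `1` to no vertex. -/
theorem exists_gammaDR_function_no_one {V : Type*} [Fintype V] (G : SimpleGraph V) :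
    ∃ f, IsDRDF G f ∧ ∑ v, f v = gammaDR G ∧ ∀ v, f v ≠ 1 := by
  have hne : {w | ∃ f, IsDRDF G f ∧ ∑ v, f v = w}.Nonempty :=
    ⟨∑ _v : V, (3 : ℕ), fun _ => 3, drdf_const3 G, rfl⟩
  have hmem : gammaDR G ∈ {w | ∃ f, IsDRDF G f ∧ ∑ v, f v = w} := Nat.sInf_mem hne
  obtain ⟨f, hf, hsum⟩ := hmem
  exact gammaDR_key G (Finset.univ.filter (fun v => f v = 1)).card f hf hsum le_rfl
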